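/- Type C linkage at the origin, ℓ even: let ℓ > 3 be even, λ+ρ strictly decreasing positive integers, and suppose both μ = λ − ε_i and ν = λ + ε_i are dominant. Then μ and ν are linked under W_ℓ if and only if (λ+ρ)_i ≡ 0 (mod ℓ/2). -/

import Mathlib

/-- The standard basis vector `ε_i` of `ℚ^N`. -/
def eps {N : ℕ} (i : Fin N) : Fin N → ℚ := fun t => if t = i then 1 else 0

/-- The affine reflection `s_{α,k}` with root `α`, coroot `αv` and constant `c = k ℓ_α`:
`x ↦ x − ((x, αv) − c) α`, i.e. `s_α(x) + c·α`. -/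
def affRef {N : ℕ} (α αv : Fin N → ℚ) (c : ℚ) (x : Fin N → ℚ) : Fin N → ℚ :=
  fun t => x t - ((∑ s, x s * αv s) - c) * α t

/-- The affine reflections generating `W_ℓ` in type `C_N`: the roots are
`ε_i ± ε_j` (`i < j`, coroot equal to the root, `ℓ_α = ℓ`) and the long roots `2ε_i`
(coroot `ε_i`, `ℓ_α = ℓ / gcd(ℓ,2)`). -/
def IsCRef (N ℓ : ℕ) (f : (Fin N → ℚ) → (Fin N → ℚ)) : Prop :=
  (∃ i j : Fin N, ∃ k : ℤ, i < j ∧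
    (f = affRef (eps i - eps j) (eps i - eps j) ((k : ℚ) * ℓ) ∨
     f = affRef (eps i + eps j) (eps i + eps j) ((k : ℚ) * ℓ))) ∨
  (∃ i : Fin N, ∃ k : ℤ,
    f = affRef ((2 : ℚ) • eps i) (eps i) ((k : ℚ) * ((ℓ : ℚ) / (Nat.gcd ℓ 2))))

/-- Two (ρ-shifted) weights are linked in type `C_N` if they lie in the same orbit of
the group generated by the affine reflections of `W_ℓ`. -/
def CLinked (N ℓ : ℕ) (x y : Fin N → ℚ) : Prop :=
  Relation.EqvGen (fun u v => ∃ f, IsCRef N ℓ f ∧ v = f u) x y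

/-- Dominant weights of type `C_N`: weakly decreasing non-negative integer tuples. -/
def DominantC (N : ℕ) (lam : Fin N → ℤ) : Prop :=
  (∀ s t : Fin N, s ≤ t → lam t ≤ lam s) ∧ ∀ t, 0 ≤ lam t

/-- `λ − ε_i`. -/
def subE {N : ℕ} (lam : Fin N → ℤ) (i : Fin N) : Fin N → ℤ :=
  fun t => lam t - if t = i then 1 else 0

/-- `λ + ε_i`. -/
def addE {N : ℕ} (lam : Fin N → ℤ) (i : Fin N) : Fin N → ℤ :=
  fun t => lam t + if t = i then 1 else 0

/-- The ρ-shift in type `C_N`: `(λ+ρ)_j = λ_j + (N+1−j)` (0-indexed: `λ_j + (N−j)`). -/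
def shiftC (N : ℕ) (lam : Fin N → ℤ) : Fin N → ℚ :=
  fun t => (lam t : ℚ) + ((N : ℚ) - ((t : ℕ) : ℚ))

/-- The class of `q` modulo `L·ℤ` and sign. -/
def clsW (L : ℚ) (q : ℚ) : Set ℚ := {q' | ∃ m : ℤ, q' = q + m * L ∨ q' = -q + m * L}

lemma clsW_add (L x : ℚ) (k : ℤ) : clsW L (x + k * L) = clsW L x := by
  ext q'
  constructor
  · rintro ⟨m, h | h⟩
    · exact ⟨m + k, Or.inl (by push_cast; linarith)⟩
    · exact ⟨m - k, Or.inr (by push_cast; linarith)⟩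
  · rintro ⟨m, h | h⟩
    · exact ⟨m - k, Or.inl (by push_cast; linarith)⟩
    · exact ⟨m + k, Or.inr (by push_cast; linarith)⟩

lemma clsW_neg (L x : ℚ) : clsW L (-x) = clsW L x := by
  ext q'
  constructor
  · rintro ⟨m, h | h⟩
    · exact ⟨m, Or.inr h⟩
    · exact ⟨m, Or.inl (by rw [h, neg_neg])⟩
  · rintro ⟨m, h | h⟩
    · exact ⟨m, Or.inr (by rw [h, neg_neg])⟩
    · exact ⟨m, Or.inl h⟩

lemma clsW_kL_sub (L x : ℚ) (k : ℤ) : clsW L (k * L - x) = clsW L x := by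
  rw [show k * L - x = -x + k * L by ring, clsW_add, clsW_neg]

/-- The multiset invariant of a point. -/
def invW (N : ℕ) (L : ℚ) (x : Fin N → ℚ) : Multiset (Set ℚ) :=
  Finset.univ.val.map (fun t => clsW L (x t))

lemma invW_perm (N : ℕ) (L : ℚ) (x y : Fin N → ℚ) (σ : Equiv.Perm (Fin N))
    (h : ∀ t, clsW L (y t) = clsW L (x (σ t))) : invW N L y = invW N L x := by
  unfold invW
  have h1 : (fun t => clsW L (y t)) = (fun t => clsW L (x t)) ∘ σ := by
    funext t; exact h t
  have h2 : Multiset.map (⇑σ) (Finset.univ : Finset (Fin N)).val = Finset.univ.val := by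
    simpa using congrArg Finset.val (Finset.map_univ_equiv σ)
  rw [h1, ← Multiset.map_map, h2]

lemma sum_mul_eps {N : ℕ} (x : Fin N → ℚ) (i : Fin N) : ∑ s, x s * eps i s = x i := by
  simp [eps, mul_ite, mul_one, mul_zero, Finset.sum_ite_eq']

lemma invW_ref (N ℓ : ℕ) (heven : Even ℓ) (f : (Fin N → ℚ) → (Fin N → ℚ))
    (hf : IsCRef N ℓ f) (x : Fin N → ℚ) : invW N ℓ (f x) = invW N ℓ x := by
  obtain ⟨i, j, k, hij, hcase | hcase⟩ | ⟨i, k, hcase⟩ := hf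
  · -- α = ε_i − ε_j
    have hne : i ≠ j := ne_of_lt hij
    have hsum : ∀ y : Fin N → ℚ, (∑ s, y s * (eps i - eps j) s) = y i - y j := by
      intro y
      simp only [Pi.sub_apply, mul_sub, Finset.sum_sub_distrib]
      rw [sum_mul_eps, sum_mul_eps]
    refine invW_perm N ℓ x (f x) (Equiv.swap i j) (fun t => ?_)
    subst hcase
    unfold affRef
    rw [hsum]
    rcases eq_or_ne t i with rfl | hti
    · rw [Equiv.swap_apply_left]
      have : x t - (x t - x j - k * ℓ) * (eps t - eps j) t = x j + (k : ℚ) * ℓ := by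
        simp [eps, Pi.sub_apply, hne]; ring
      rw [this, clsW_add]
    · rcases eq_or_ne t j with rfl | htj
      · rw [Equiv.swap_apply_right]
        have : x t - (x i - x t - k * ℓ) * (eps i - eps t) t = x i + ((-k : ℤ) : ℚ) * ℓ := by
          simp [eps, Pi.sub_apply, hti]; push_cast; ring
        rw [this, clsW_add]
      · rw [Equiv.swap_apply_of_ne_of_ne hti htj]
        have : x t - (x i - x j - k * ℓ) * (eps i - eps j) t = x t := by
          simp [eps, Pi.sub_apply, if_neg hti, if_neg htj]
        rw [this]
  · -- α = ε_i + ε_j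
    have hne : i ≠ j := ne_of_lt hij
    have hsum : ∀ y : Fin N → ℚ, (∑ s, y s * (eps i + eps j) s) = y i + y j := by
      intro y
      simp only [Pi.add_apply, mul_add, Finset.sum_add_distrib]
      rw [sum_mul_eps, sum_mul_eps]
    refine invW_perm N ℓ x (f x) (Equiv.swap i j) (fun t => ?_)
    subst hcase
    unfold affRef
    rw [hsum]
    rcases eq_or_ne t i with rfl | hti
    · rw [Equiv.swap_apply_left]
      have : x t - (x t + x j - k * ℓ) * (eps t + eps j) t = k * ℓ - x j := by
        simp [eps, Pi.add_apply, hne]; ring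
      rw [this, clsW_kL_sub]
    · rcases eq_or_ne t j with rfl | htj
      · rw [Equiv.swap_apply_right]
        have : x t - (x i + x t - k * ℓ) * (eps i + eps t) t = k * ℓ - x i := by
          simp [eps, Pi.add_apply, hti]; ring
        rw [this, clsW_kL_sub]
      · rw [Equiv.swap_apply_of_ne_of_ne hti htj]
        have : x t - (x i + x j - k * ℓ) * (eps i + eps j) t = x t := by
          simp [eps, Pi.add_apply, if_neg hti, if_neg htj]
        rw [this]
  · -- α = 2ε_i
    have hg : (Nat.gcd ℓ 2 : ℚ) = 2 := by
      rw [Nat.gcd_eq_right heven.two_dvd]; norm_num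
    refine invW_perm N ℓ x (f x) (Equiv.refl _) (fun t => ?_)
    subst hcase
    unfold affRef
    rw [sum_mul_eps]
    simp only [Equiv.refl_apply]
    rcases eq_or_ne t i with rfl | hti
    · have : x t - (x t - k * (ℓ / (Nat.gcd ℓ 2 : ℚ))) * ((2 : ℚ) • eps t) t
          = k * ℓ - x t := by
        simp [eps, hg, Pi.smul_apply]; ring
      rw [this, clsW_kL_sub]
    · have : x t - (x i - k * (ℓ / (Nat.gcd ℓ 2 : ℚ))) * ((2 : ℚ) • eps i) t = x t := by
        simp [eps, Pi.smul_apply, if_neg hti]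
      rw [this]

lemma invW_linked (N ℓ : ℕ) (heven : Even ℓ) (u v : Fin N → ℚ)
    (h : CLinked N ℓ u v) : invW N ℓ u = invW N ℓ v := by
  induction h with
  | rel a b hab => obtain ⟨f, hf, rfl⟩ := hab; exact (invW_ref N ℓ heven f hf a).symm
  | refl a => rfl
  | symm a b _ ih => exact ih.symm
  | trans a b c _ _ ih1 ih2 => exact ih1.trans ih2
/-- Type `C` linkage at the origin, `ℓ` even: if `ℓ > 3` is even and `λ`, `μ = λ − ε_i`,
`ν = λ + ε_i` are dominant, then `μ` and `ν` are linked under `W_ℓ` if and only if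
`(λ+ρ)_i ≡ 0 (mod ℓ/2)`. -/
theorem linked_e_f_same_typeC_even (N ℓ : ℕ) (heven : Even ℓ) (hl : 3 < ℓ)
    (lam : Fin N → ℤ) (hlam : DominantC N lam) (i : Fin N)
    (hmu : DominantC N (subE lam i)) (hnu : DominantC N (addE lam i)) :
    CLinked N ℓ (shiftC N (subE lam i)) (shiftC N (addE lam i)) ↔
      ((ℓ / 2 : ℕ) : ℤ) ∣ (lam i + ((N : ℤ) - (i : ℕ))) := by
  set x := shiftC N (subE lam i) with hxdef
  set y := shiftC N (addE lam i) with hydef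
  set A : ℤ := lam i + ((N : ℤ) - (i : ℕ)) with hA
  have hL2 : (ℓ : ℚ) = 2 * ((ℓ / 2 : ℕ) : ℚ) := by
    obtain ⟨c, rfl⟩ := heven
    push_cast [show (c + c) / 2 = c by omega]
    ring
  have hxi : x i = (A : ℚ) - 1 := by
    simp [hxdef, shiftC, subE, hA]; push_cast; ring
  have hyi : y i = (A : ℚ) + 1 := by
    simp [hydef, shiftC, addE, hA]; push_cast; ring
  have hoff : ∀ t : Fin N, t ≠ i → x t = y t := by
    intro t ht
    simp [hxdef, hydef, shiftC, subE, addE, if_neg ht]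
  constructor
  · -- linked → divisibility
    intro hlink
    have hinv : invW N ℓ x = invW N ℓ y := invW_linked N ℓ heven x y hlink
    have huniv : (Finset.univ : Finset (Fin N)).val
        = i ::ₘ ((Finset.univ : Finset (Fin N)).erase i).val := by
      rw [Finset.erase_val]
      exact (Multiset.cons_erase
        (by simp [Finset.mem_def.symm] : i ∈ (Finset.univ : Finset (Fin N)).val)).symm
    have hrest : ((Finset.univ : Finset (Fin N)).erase i).val.map (fun t => clsW ℓ (x t))
        = ((Finset.univ : Finset (Fin N)).erase i).val.map (fun t => clsW ℓ (y t)) := by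
      refine Multiset.map_congr rfl (fun t ht => ?_)
      have : t ≠ i := (Finset.mem_erase.mp (Finset.mem_def.mpr ht)).1
      rw [hoff t this]
    have h1 : invW N ℓ x
        = clsW ℓ (x i) ::ₘ ((Finset.univ : Finset (Fin N)).erase i).val.map (fun t => clsW ℓ (x t)) := by
      unfold invW; rw [huniv, Multiset.map_cons]
    have h2 : invW N ℓ y
        = clsW ℓ (y i) ::ₘ ((Finset.univ : Finset (Fin N)).erase i).val.map (fun t => clsW ℓ (y t)) := by
      unfold invW; rw [huniv, Multiset.map_cons]
    rw [h1, h2, hrest] at hinv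
    have hcls : clsW (ℓ : ℚ) (x i) = clsW (ℓ : ℚ) (y i) := (Multiset.cons_inj_left _).mp hinv
    have hymem : y i ∈ clsW (ℓ : ℚ) (x i) := by
      rw [hcls]; exact ⟨0, Or.inl (by push_cast; ring)⟩
    obtain ⟨m, hm | hm⟩ := hymem
    · -- (A+1) = (A−1) + mℓ : impossible
      exfalso
      rw [hxi, hyi] at hm
      have hq : ((m * ℓ : ℤ) : ℚ) = ((2 : ℤ) : ℚ) := by push_cast; linarith
      have h2 : m * (ℓ : ℤ) = 2 := by exact_mod_cast hq
      have hdvd : (ℓ : ℤ) ∣ 2 := ⟨m, by linarith⟩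
      have := Int.le_of_dvd (by norm_num) hdvd
      omega
    · -- (A+1) = −(A−1) + mℓ : gives 2A = mℓ
      rw [hxi, hyi] at hm
      have hq : ((2 * A : ℤ) : ℚ) = ((m * ℓ : ℤ) : ℚ) := by push_cast; linarith
      have h2 : 2 * A = m * ℓ := by exact_mod_cast hq
      refine ⟨m, ?_⟩
      have hℓ : (ℓ : ℤ) = 2 * ((ℓ / 2 : ℕ) : ℤ) := by
        obtain ⟨c, hc⟩ := heven
        omega
      rw [hℓ] at h2
      linarith
  · -- divisibility → linked
    rintro ⟨m, hm⟩
    have hg : (Nat.gcd ℓ 2 : ℚ) = 2 := by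
      rw [Nat.gcd_eq_right heven.two_dvd]; norm_num
    have hAq : (A : ℚ) = ((ℓ / 2 : ℕ) : ℚ) * (m : ℚ) := by
      have := congrArg (fun z : ℤ => (z : ℚ)) hm
      push_cast at this
      exact this
    refine Relation.EqvGen.rel x y
      ⟨affRef ((2 : ℚ) • eps i) (eps i) ((m : ℚ) * ((ℓ : ℚ) / (Nat.gcd ℓ 2))),
        Or.inr ⟨i, m, rfl⟩, ?_⟩
    funext t
    unfold affRef
    rw [sum_mul_eps]
    rcases eq_or_ne t i with rfl | hti
    · rw [hxi, hyi]
      have hz : (ℓ : ℚ) / 2 = ((ℓ / 2 : ℕ) : ℚ) := by rw [hL2]; ring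
      simp only [eps, Pi.smul_apply, smul_eq_mul, if_pos rfl, eq_self_iff_true, if_true,
        mul_one, hg, hz]
      linarith [hAq]
    · rw [hoff t hti]
      simp [eps, Pi.smul_apply, if_neg hti]
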